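/- Let S be a commutative ring, F a formal group law over S, n ≥ 2, and 1 ≤ i ≤ n−1. Then there is a well-defined additive, left-R-linear map ∇ : A → R with ∇(r1 ⊗ r2) = r1·∂'_i(r2) on pure tensors (well-defined since ∂'_i is R^{s_i}-linear), and it satisfies ∇((r ⊗ 1)·ξ') = r for every r ∈ R; i.e. the map r ↦ (r ⊗ 1)·ξ' is a section of ∇, and ∇ is a retraction splitting A off onto a free rank-one summand. -/

import Mathlib

/- Common setup: substitution of multivariate power series, formal group laws,
formal inverses, and the variable–swapping operation. -/

open MvPowerSeries Finsupp

noncomputable section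

variable {S : Type*} [CommRing S]

/-- Substitution of a family of multivariate power series (each intended to have zero
constant coefficient) into a power series in `k` variables.  When every `a j` has zero
constant coefficient, the coefficient of a monomial `m` of the substituted series only
receives contributions from exponents `d` with `d j ≤ deg m`, so the finite sum below
computes the genuine substitution. -/
noncomputable def msubst {k n : ℕ} (a : Fin k → MvPowerSeries (Fin n) S)
    (F : MvPowerSeries (Fin k) S) : MvPowerSeries (Fin n) S :=
  fun m =>
    ∑ d ∈ Finset.Iic (equivFunOnFinite.symm fun _ : Fin k => m.sum fun _ e => e),
      MvPowerSeries.coeff d F * MvPowerSeries.coeff m (∏ j, a j ^ d j)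

/-- `F ∈ S[[x,y]]` is a (one-dimensional, commutative) formal group law over `S`:
zero constant coefficient, commutativity `F(x,y) = F(y,x)`, unitality `F(x,0) = x`,
and associativity `F(F(x,y),z) = F(x,F(y,z))`. -/
def IsFormalGroupLaw (F : MvPowerSeries (Fin 2) S) : Prop :=
  MvPowerSeries.constantCoeff (σ := Fin 2) (R := S) F = 0 ∧
  msubst ![(X 1 : MvPowerSeries (Fin 2) S), X 0] F = F ∧
  msubst ![(X 0 : MvPowerSeries (Fin 2) S), 0] F = X 0 ∧
  msubst ![msubst ![(X 0 : MvPowerSeries (Fin 3) S), X 1] F, X 2] F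
    = msubst ![(X 0 : MvPowerSeries (Fin 3) S), msubst ![(X 1 : MvPowerSeries (Fin 3) S), X 2] F] F

/-- `ι ∈ S[[x]]` is the formal inverse of `F`: it has zero constant coefficient
and `F(x, ι(x)) = 0`. -/
def IsFormalInverse (F : MvPowerSeries (Fin 2) S) (ι : MvPowerSeries (Fin 1) S) : Prop :=
  MvPowerSeries.constantCoeff (σ := Fin 1) (R := S) ι = 0 ∧
  msubst ![(X 0 : MvPowerSeries (Fin 1) S), ι] F = 0

/-- `ι(b)`, the substitution of `b` into the formal inverse `ι`. -/
noncomputable def fneg (ι : MvPowerSeries (Fin 1) S) {n : ℕ}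
    (b : MvPowerSeries (Fin n) S) : MvPowerSeries (Fin n) S :=
  msubst ![b] ι

/-- `a −_F b := F(a, ι(b))`. -/
noncomputable def fsub (F : MvPowerSeries (Fin 2) S) (ι : MvPowerSeries (Fin 1) S) {n : ℕ}
    (a b : MvPowerSeries (Fin n) S) : MvPowerSeries (Fin n) S :=
  msubst ![a, fneg ι b] F

/-- Substitution `g(a,b)` of two power series into a two-variable power series `g`. -/
noncomputable def gsub (g : MvPowerSeries (Fin 2) S) {n : ℕ}
    (a b : MvPowerSeries (Fin n) S) : MvPowerSeries (Fin n) S :=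
  msubst ![a, b] g

/-- The map on multivariate power series interchanging the variables `x_i` and `x_j`
(the renaming along the transposition `(i,j)`). -/
def swapVars {n : ℕ} (i j : Fin n) (f : MvPowerSeries (Fin n) S) :
    MvPowerSeries (Fin n) S :=
  fun m => f (equivMapDomain (Equiv.swap i j) m)

theorem swapVars_coeff {n : ℕ} (i j : Fin n) (f : MvPowerSeries (Fin n) S) (m : Fin n →₀ ℕ) :
    MvPowerSeries.coeff m (swapVars i j f)
      = MvPowerSeries.coeff (equivMapDomain (Equiv.swap i j) m) f := rfl

theorem equivMapDomain_swap_invol {n : ℕ} (i j : Fin n) (m : Fin n →₀ ℕ) :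
    equivMapDomain (Equiv.swap i j) (equivMapDomain (Equiv.swap i j) m) = m := by
  rw [← equivMapDomain_trans, Equiv.swap_swap, equivMapDomain_refl]

theorem equivMapDomain_add' {n : ℕ} (e : Fin n ≃ Fin n) (a b : Fin n →₀ ℕ) :
    equivMapDomain e (a + b) = equivMapDomain e a + equivMapDomain e b := by
  ext x; simp [equivMapDomain_apply]

theorem swapVars_add {n : ℕ} (i j : Fin n) (f h : MvPowerSeries (Fin n) S) :
    swapVars i j (f + h) = swapVars i j f + swapVars i j h := rfl

theorem swapVars_mul {n : ℕ} (i j : Fin n) (f h : MvPowerSeries (Fin n) S) :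
    swapVars i j (f * h) = swapVars i j f * swapVars i j h := by
  ext m
  rw [swapVars_coeff, MvPowerSeries.coeff_mul, MvPowerSeries.coeff_mul]
  refine Finset.sum_nbij'
    (fun p => (equivMapDomain (Equiv.swap i j) p.1, equivMapDomain (Equiv.swap i j) p.2))
    (fun p => (equivMapDomain (Equiv.swap i j) p.1, equivMapDomain (Equiv.swap i j) p.2))
    ?_ ?_ ?_ ?_ ?_
  · intro p hp
    rw [Finset.HasAntidiagonal.mem_antidiagonal] at hp ⊢
    rw [← equivMapDomain_add', hp, equivMapDomain_swap_invol]
  · intro p hp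
    rw [Finset.HasAntidiagonal.mem_antidiagonal] at hp ⊢
    rw [← equivMapDomain_add', hp]
  · intro p _; simp [equivMapDomain_swap_invol]
  · intro p _; simp [equivMapDomain_swap_invol]
  · intro p _
    rw [swapVars_coeff, swapVars_coeff, equivMapDomain_swap_invol, equivMapDomain_swap_invol]

theorem swapVars_C {n : ℕ} (i j : Fin n) (s : S) :
    swapVars i j (MvPowerSeries.C (σ := Fin n) (R := S) s) = MvPowerSeries.C (σ := Fin n) (R := S) s := by
  ext m
  rw [swapVars_coeff, MvPowerSeries.coeff_C, MvPowerSeries.coeff_C]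
  by_cases hm : m = 0
  · subst hm; rw [equivMapDomain_zero]
  · rw [if_neg, if_neg hm]
    intro hc
    apply hm
    have := congrArg (equivMapDomain (Equiv.swap i j)) hc
    rwa [equivMapDomain_swap_invol, equivMapDomain_zero] at this

theorem swapVars_one {n : ℕ} (i j : Fin n) :
    swapVars i j (1 : MvPowerSeries (Fin n) S) = 1 := by
  have := swapVars_C (S := S) i j 1
  rwa [map_one] at this

/-- The fixed subalgebra `R^{s_i}` of power series invariant under interchanging
the variables `x_i` and `x_j`. -/
noncomputable def fixedSubalgebra (S : Type*) [CommRing S] {n : ℕ} (i j : Fin n) :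
    Subalgebra S (MvPowerSeries (Fin n) S) where
  carrier := {f | swapVars i j f = f}
  mul_mem' := by
    intro a b ha hb
    simp only [Set.mem_setOf_eq] at *
    rw [swapVars_mul, ha, hb]
  add_mem' := by
    intro a b ha hb
    simp only [Set.mem_setOf_eq] at *
    rw [swapVars_add, ha, hb]
  algebraMap_mem' := fun s => swapVars_C i j s

/-- `s_i` as an algebra homomorphism over the fixed subalgebra. -/
noncomputable def swapAlgHom (S : Type*) [CommRing S] {n : ℕ} (i j : Fin n) :
    MvPowerSeries (Fin n) S →ₐ[fixedSubalgebra S i j] MvPowerSeries (Fin n) S where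
  toFun := swapVars i j
  map_one' := swapVars_one i j
  map_mul' := swapVars_mul i j
  map_zero' := rfl
  map_add' := swapVars_add i j
  commutes' := fun r => r.2

open TensorProduct in
/-- The elementary Bott–Samelson bimodule `A = R ⊗_{R^{s_i}} R`. -/
noncomputable abbrev BSB (S : Type*) [CommRing S] {n : ℕ} (i j : Fin n) : Type _ :=
  (MvPowerSeries (Fin n) S) ⊗[fixedSubalgebra S i j] (MvPowerSeries (Fin n) S)

/-- The multiplication map `μ : A → R`, `r1 ⊗ r2 ↦ r1·r2`. -/
noncomputable def mulHom (S : Type*) [CommRing S] {n : ℕ} (i j : Fin n) :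
    BSB S i j →ₐ[fixedSubalgebra S i j] MvPowerSeries (Fin n) S :=
  Algebra.TensorProduct.productMap (AlgHom.id _ _) (AlgHom.id _ _)

/-- The twisted multiplication map `μ_s : A → R`, `r1 ⊗ r2 ↦ r1·s_i(r2)`. -/
noncomputable def mulsHom (S : Type*) [CommRing S] {n : ℕ} (i j : Fin n) :
    BSB S i j →ₐ[fixedSubalgebra S i j] MvPowerSeries (Fin n) S :=
  Algebra.TensorProduct.productMap (AlgHom.id _ _) (swapAlgHom S i j)

open TensorProduct in
/-- The element `ξ = x_i⊗1 −_F 1⊗x_{i+1} := (g(x_i,x_j)⁻¹ ⊗ 1)·(1 ⊗ x_i − x_j ⊗ 1)` of `A`. -/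
noncomputable def xiElt (g : MvPowerSeries (Fin 2) S) {n : ℕ} (i j : Fin n) : BSB S i j :=
  (Ring.inverse (gsub g (X i) (X j)) ⊗ₜ[fixedSubalgebra S i j] (1 : MvPowerSeries (Fin n) S)) *
    ((1 : MvPowerSeries (Fin n) S) ⊗ₜ[fixedSubalgebra S i j] (X i)
      - (X j) ⊗ₜ[fixedSubalgebra S i j] (1 : MvPowerSeries (Fin n) S))

open TensorProduct in
/-- The element `ξ' = x_{i+1}⊗1 −_F 1⊗x_{i+1} := (g(x_j,x_i)⁻¹ ⊗ 1)·(1 ⊗ x_i − x_i ⊗ 1)` of `A`. -/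
noncomputable def xiElt' (g : MvPowerSeries (Fin 2) S) {n : ℕ} (i j : Fin n) : BSB S i j :=
  (Ring.inverse (gsub g (X j) (X i)) ⊗ₜ[fixedSubalgebra S i j] (1 : MvPowerSeries (Fin n) S)) *
    ((1 : MvPowerSeries (Fin n) S) ⊗ₜ[fixedSubalgebra S i j] (X i)
      - (X i) ⊗ₜ[fixedSubalgebra S i j] (1 : MvPowerSeries (Fin n) S))

open TensorProduct

section AuxNabla

theorem aux_degm_eq {n : ℕ} (m : Fin n →₀ ℕ) : (m.sum fun _ e => e) = ∑ l, m l :=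
  Finsupp.sum_fintype _ _ fun _ => rfl

theorem aux_le_degm {n : ℕ} (m : Fin n →₀ ℕ) (l : Fin n) : m l ≤ m.sum fun _ e => e := by
  rw [aux_degm_eq]
  exact Finset.single_le_sum (fun _ _ => Nat.zero_le _) (Finset.mem_univ l)

theorem aux_degm_add {n : ℕ} (a b : Fin n →₀ ℕ) :
    ((a + b).sum fun _ e => e) = (a.sum fun _ e => e) + (b.sum fun _ e => e) := by
  simp [aux_degm_eq, Finset.sum_add_distrib]

theorem aux_degm_zero_iff {n : ℕ} (m : Fin n →₀ ℕ) : (m.sum fun _ e => e) = 0 ↔ m = 0 := by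
  rw [aux_degm_eq]
  simp [Finset.sum_eq_zero_iff, Finsupp.ext_iff]

/-- Pushforward of an exponent along a variable map. -/
def rE {k n : ℕ} (r : Fin k → Fin n) (d : Fin k →₀ ℕ) : Fin n →₀ ℕ :=
  ∑ t, Finsupp.single (r t) (d t)

/-- Pullback of an exponent along a variable map. -/
def rmap {k n : ℕ} (r : Fin k → Fin n) (m : Fin n →₀ ℕ) : Fin k →₀ ℕ :=
  equivFunOnFinite.symm fun t => m (r t)

@[simp] theorem rmap_apply {k n : ℕ} (r : Fin k → Fin n) (m : Fin n →₀ ℕ) (t : Fin k) :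
    rmap r m t = m (r t) := rfl

/-- `m` is supported on the range of `r`. -/
def RSupp {k n : ℕ} (r : Fin k → Fin n) (m : Fin n →₀ ℕ) : Prop :=
  ∀ l, (∀ t, r t ≠ l) → m l = 0

theorem rE_apply_of_inj {k n : ℕ} {r : Fin k → Fin n} (hr : Function.Injective r)
    (d : Fin k →₀ ℕ) (t : Fin k) : rE r d (r t) = d t := by
  classical
  rw [rE, Finsupp.finset_sum_apply, Finset.sum_eq_single t]
  · simp [Finsupp.single_apply]
  · intro b _ hb
    simp [Finsupp.single_apply, hr.eq_iff, hb]
  · simp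

theorem rE_apply_notin {k n : ℕ} (r : Fin k → Fin n) (d : Fin k →₀ ℕ) (l : Fin n)
    (hl : ∀ t, r t ≠ l) : rE r d l = 0 := by
  classical
  rw [rE, Finsupp.finset_sum_apply]
  exact Finset.sum_eq_zero fun t _ => by simp [Finsupp.single_apply, hl t]

theorem RSupp_rE {k n : ℕ} (r : Fin k → Fin n) (d : Fin k →₀ ℕ) : RSupp r (rE r d) :=
  fun l hl => rE_apply_notin r d l hl

theorem rmap_rE {k n : ℕ} {r : Fin k → Fin n} (hr : Function.Injective r) (d : Fin k →₀ ℕ) :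
    rmap r (rE r d) = d := by
  ext t; rw [rmap_apply, rE_apply_of_inj hr]

theorem rE_rmap {k n : ℕ} {r : Fin k → Fin n} (hr : Function.Injective r) {m : Fin n →₀ ℕ}
    (hs : RSupp r m) : rE r (rmap r m) = m := by
  ext l
  by_cases h : ∃ t, r t = l
  · obtain ⟨t, rfl⟩ := h
    rw [rE_apply_of_inj hr, rmap_apply]
  · push_neg at h
    rw [rE_apply_notin r _ l h, hs l h]

theorem rE_add {k n : ℕ} (r : Fin k → Fin n) (d1 d2 : Fin k →₀ ℕ) :
    rE r (d1 + d2) = rE r d1 + rE r d2 := by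
  simp [rE, Finsupp.single_add, Finset.sum_add_distrib]

theorem rmap_add {k n : ℕ} (r : Fin k → Fin n) (m1 m2 : Fin n →₀ ℕ) :
    rmap r (m1 + m2) = rmap r m1 + rmap r m2 := by
  ext t; simp

theorem RSupp_of_add {k n : ℕ} {r : Fin k → Fin n} {m1 m2 : Fin n →₀ ℕ}
    (h : RSupp r (m1 + m2)) : RSupp r m1 ∧ RSupp r m2 := by
  constructor <;> intro l hl <;> have := h l hl <;>
    simp only [Finsupp.add_apply] at this <;> omega

theorem rmap_le_degm {k n : ℕ} (r : Fin k → Fin n) (m : Fin n →₀ ℕ) :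
    rmap r m ≤ equivFunOnFinite.symm fun _ : Fin k => m.sum fun _ e => e := by
  intro t
  exact aux_le_degm m (r t)

theorem degm_rmap_le {k n : ℕ} {r : Fin k → Fin n} (hr : Function.Injective r) (m : Fin n →₀ ℕ) :
    ((rmap r m).sum fun _ e => e) ≤ m.sum fun _ e => e := by
  rw [aux_degm_eq, aux_degm_eq]
  calc ∑ t, rmap r m t = ∑ l ∈ Finset.univ.image r, m l := by
        rw [Finset.sum_image (fun a _ b _ h => hr h)]
        simp
    _ ≤ ∑ l, m l := Finset.sum_le_sum_of_subset (Finset.subset_univ _)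

end AuxNabla
section AuxNabla2

variable {S : Type*} [CommRing S]

instance RSupp.decidable {k n : ℕ} (r : Fin k → Fin n) (m : Fin n →₀ ℕ) :
    Decidable (RSupp r m) := by
  unfold RSupp; infer_instance

/-- Renaming of variables along an (injective) variable map, as an operation on
power series coefficients. -/
noncomputable def rrename {k n : ℕ} (r : Fin k → Fin n) (h : MvPowerSeries (Fin k) S) :
    MvPowerSeries (Fin n) S :=
  fun m => if RSupp r m then h (rmap r m) else 0

theorem coeff_rrename {k n : ℕ} (r : Fin k → Fin n) (h : MvPowerSeries (Fin k) S)
    (m : Fin n →₀ ℕ) :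
    MvPowerSeries.coeff m (rrename r h)
      = if RSupp r m then MvPowerSeries.coeff (rmap r m) h else 0 := rfl

theorem rrename_add {k n : ℕ} (r : Fin k → Fin n) (h1 h2 : MvPowerSeries (Fin k) S) :
    rrename r (h1 + h2) = rrename r h1 + rrename r h2 := by
  ext m
  simp only [map_add, coeff_rrename]
  split <;> simp

theorem rmap_eq_zero_iff {k n : ℕ} {r : Fin k → Fin n} (hr : Function.Injective r)
    {m : Fin n →₀ ℕ} (hs : RSupp r m) : rmap r m = 0 ↔ m = 0 := by
  constructor
  · intro h
    rw [← rE_rmap hr hs, h]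
    simp [rE]
  · intro h
    subst h
    ext t
    simp

theorem rrename_one {k n : ℕ} {r : Fin k → Fin n} (hr : Function.Injective r) :
    rrename r (1 : MvPowerSeries (Fin k) S) = 1 := by
  ext m
  rw [coeff_rrename]
  by_cases hs : RSupp r m
  · rw [if_pos hs, MvPowerSeries.coeff_one, MvPowerSeries.coeff_one]
    simp only [rmap_eq_zero_iff hr hs]
  · rw [if_neg hs, MvPowerSeries.coeff_one, if_neg]
    intro h
    subst h
    exact hs fun l _ => rfl

theorem rrename_mul {k n : ℕ} {r : Fin k → Fin n} (hr : Function.Injective r)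
    (h1 h2 : MvPowerSeries (Fin k) S) :
    rrename r (h1 * h2) = rrename r h1 * rrename r h2 := by
  ext m
  rw [coeff_rrename, MvPowerSeries.coeff_mul]
  by_cases hs : RSupp r m
  · rw [if_pos hs, MvPowerSeries.coeff_mul]
    refine Finset.sum_nbij' (fun p => (rE r p.1, rE r p.2)) (fun p => (rmap r p.1, rmap r p.2))
      ?_ ?_ ?_ ?_ ?_
    · intro p hp
      rw [Finset.HasAntidiagonal.mem_antidiagonal] at hp ⊢
      rw [← rE_add, hp, rE_rmap hr hs]
    · intro p hp
      rw [Finset.HasAntidiagonal.mem_antidiagonal] at hp ⊢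
      rw [← rmap_add, hp]
    · intro p _
      simp [rmap_rE hr]
    · intro p hp
      rw [Finset.HasAntidiagonal.mem_antidiagonal] at hp
      have hsp : RSupp r (p.1 + p.2) := hp.symm ▸ hs
      have h1 := (RSupp_of_add hsp).1
      have h2 := (RSupp_of_add hsp).2
      simp [rE_rmap hr h1, rE_rmap hr h2]
    · intro p _
      simp [coeff_rrename, RSupp_rE, rmap_rE hr]
  · rw [if_neg hs]
    symm
    apply Finset.sum_eq_zero
    intro p hp
    simp only [Finset.HasAntidiagonal.mem_antidiagonal] at hp
    by_cases h1 : RSupp r p.1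
    · by_cases h2 : RSupp r p.2
      · exact absurd (by intro l hl; rw [← hp]; simp [Finsupp.add_apply, h1 l hl, h2 l hl]) hs
      · rw [coeff_rrename (m := p.2), if_neg h2, mul_zero]
    · rw [coeff_rrename (m := p.1), if_neg h1, zero_mul]

/-- `rrename` as a ring homomorphism. -/
noncomputable def rrenameHom {k n : ℕ} (r : Fin k → Fin n) (hr : Function.Injective r) :
    MvPowerSeries (Fin k) S →+* MvPowerSeries (Fin n) S where
  toFun := rrename r
  map_one' := rrename_one hr
  map_mul' := rrename_mul hr
  map_zero' := by
    ext m
    rw [coeff_rrename]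
    split <;> simp
  map_add' := rrename_add r

theorem rrenameHom_apply {k n : ℕ} (r : Fin k → Fin n) (hr : Function.Injective r)
    (h : MvPowerSeries (Fin k) S) : rrenameHom r hr h = rrename r h := rfl

theorem rE_single {k n : ℕ} (r : Fin k → Fin n) (t : Fin k) (e : ℕ) :
    rE r (Finsupp.single t e) = Finsupp.single (r t) e := by
  rw [rE, Finset.sum_eq_single t]
  · simp
  · intro b _ hb; simp [Finsupp.single_apply, Ne.symm hb]
  · simp

theorem rrename_X {k n : ℕ} {r : Fin k → Fin n} (hr : Function.Injective r) (t : Fin k) :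
    rrename r (MvPowerSeries.X t : MvPowerSeries (Fin k) S) = MvPowerSeries.X (r t) := by
  ext m
  rw [coeff_rrename, MvPowerSeries.coeff_X m (r t)]
  by_cases hs : RSupp r m
  · rw [if_pos hs, MvPowerSeries.coeff_X (rmap r m) t]
    have : rmap r m = Finsupp.single t 1 ↔ m = Finsupp.single (r t) 1 := by
      constructor
      · intro h
        rw [← rE_rmap hr hs, h, rE_single]
      · intro h
        subst h
        ext t'
        rw [rmap_apply]
        simp [Finsupp.single_apply, hr.eq_iff, eq_comm]
    simp only [this]
  · rw [if_neg hs, if_neg]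
    intro h
    subst h
    refine hs fun l hl => ?_
    rw [Finsupp.single_apply, if_neg (hl t)]

end AuxNabla2
section AuxNabla3

variable {S : Type*} [CommRing S]

theorem aux_prod_monomial {k n : ℕ} (s : Finset (Fin k)) (e : Fin k → (Fin n →₀ ℕ)) :
    (∏ t ∈ s, MvPowerSeries.monomial (e t) (1 : S))
      = MvPowerSeries.monomial (∑ t ∈ s, e t) 1 := by
  classical
  induction s using Finset.induction with
  | empty =>
    simp only [Finset.prod_empty, Finset.sum_empty]
    ext m
    rw [MvPowerSeries.coeff_monomial, MvPowerSeries.coeff_one]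
  | insert _ _ hnotmem ih =>
    rw [Finset.prod_insert hnotmem, Finset.sum_insert hnotmem, ih,
      MvPowerSeries.monomial_mul_monomial, one_mul]

theorem aux_prod_X_pow {k n : ℕ} (r : Fin k → Fin n) (d : Fin k →₀ ℕ) :
    (∏ t, (MvPowerSeries.X (r t) : MvPowerSeries (Fin n) S) ^ d t)
      = MvPowerSeries.monomial (rE r d) 1 := by
  have : ∀ t : Fin k, (MvPowerSeries.X (r t) : MvPowerSeries (Fin n) S) ^ d t
      = MvPowerSeries.monomial (Finsupp.single (r t) (d t)) 1 :=
    fun t => MvPowerSeries.X_pow_eq (r t) (d t)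
  rw [Finset.prod_congr rfl fun t _ => this t, aux_prod_monomial]
  rfl

/-- Substituting the variables `X (r t)` is the same as renaming along `r`. -/
theorem msubst_X_eq_rrename {k n : ℕ} {r : Fin k → Fin n} (hr : Function.Injective r)
    (h : MvPowerSeries (Fin k) S) :
    msubst (fun t => (MvPowerSeries.X (r t) : MvPowerSeries (Fin n) S)) h = rrename r h := by
  ext m
  rw [coeff_rrename]
  show (∑ d ∈ Finset.Iic (equivFunOnFinite.symm fun _ : Fin k => m.sum fun _ e => e),
      MvPowerSeries.coeff d h * MvPowerSeries.coeff m
        (∏ t, (MvPowerSeries.X (r t) : MvPowerSeries (Fin n) S) ^ d t)) = _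
  have key : ∀ d : Fin k →₀ ℕ,
      MvPowerSeries.coeff d h * MvPowerSeries.coeff m
        (∏ t, (MvPowerSeries.X (r t) : MvPowerSeries (Fin n) S) ^ d t)
      = if d = rmap r m ∧ RSupp r m then MvPowerSeries.coeff d h else 0 := by
    intro d
    rw [aux_prod_X_pow, MvPowerSeries.coeff_monomial]
    by_cases hm : m = rE r d
    · rw [if_pos hm, mul_one, if_pos]
      subst hm
      exact ⟨(rmap_rE hr d).symm, RSupp_rE r d⟩
    · rw [if_neg hm, mul_zero, if_neg]
      rintro ⟨hd, hsm⟩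
      exact hm (by rw [hd, rE_rmap hr hsm])
  rw [Finset.sum_congr rfl fun d _ => key d]
  by_cases hs : RSupp r m
  · rw [if_pos hs]
    have : ∀ d : Fin k →₀ ℕ, (if d = rmap r m ∧ RSupp r m then MvPowerSeries.coeff d h else 0)
        = if d = rmap r m then MvPowerSeries.coeff d h else 0 := by
      intro d
      by_cases hd : d = rmap r m
      · rw [if_pos ⟨hd, hs⟩, if_pos hd]
      · rw [if_neg (fun hc => hd hc.1), if_neg hd]
    rw [Finset.sum_congr rfl fun d _ => this d, Finset.sum_ite_eq' _ (rmap r m)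
      (fun d => MvPowerSeries.coeff d h), if_pos (Finset.mem_Iic.mpr (rmap_le_degm r m))]
  · rw [if_neg hs]
    exact Finset.sum_eq_zero fun d _ => by rw [if_neg (fun hc => hs hc.2)]

/-- The constant coefficient of a substitution is the constant coefficient of the
substituted series. -/
theorem constantCoeff_msubst {k n : ℕ} (a : Fin k → MvPowerSeries (Fin n) S)
    (h : MvPowerSeries (Fin k) S) :
    MvPowerSeries.constantCoeff (σ := Fin n) (R := S) (msubst a h)
      = MvPowerSeries.constantCoeff (σ := Fin k) (R := S) h := by
  rw [← MvPowerSeries.coeff_zero_eq_constantCoeff, ← MvPowerSeries.coeff_zero_eq_constantCoeff]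
  show (∑ d ∈ Finset.Iic (equivFunOnFinite.symm fun _ : Fin k =>
      (0 : Fin n →₀ ℕ).sum fun _ e => e), MvPowerSeries.coeff d h *
      MvPowerSeries.coeff (0 : Fin n →₀ ℕ) (∏ t, a t ^ d t)) = _
  have h0 : (equivFunOnFinite.symm fun _ : Fin k =>
      (0 : Fin n →₀ ℕ).sum fun _ e => e) = (0 : Fin k →₀ ℕ) := by
    ext t; simp
  have hIic : Finset.Iic (0 : Fin k →₀ ℕ) = {0} := by
    ext d
    simp only [Finset.mem_Iic, Finset.mem_singleton]
    constructor
    · intro hd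
      ext t
      exact Nat.le_zero.mp (hd t)
    · rintro rfl; exact le_rfl
  rw [h0, hIic, Finset.sum_singleton]
  have : (∏ t, a t ^ ((0 : Fin k →₀ ℕ) t)) = (1 : MvPowerSeries (Fin n) S) := by
    simp
  rw [this, MvPowerSeries.coeff_one, if_pos rfl, mul_one]

/-- Vanishing of low-degree coefficients of products of power series with zero constant
coefficient. -/
theorem coeff_prod_pow_eq_zero {k n : ℕ} (a : Fin k → MvPowerSeries (Fin n) S)
    (ha : ∀ t, MvPowerSeries.constantCoeff (σ := Fin n) (R := S) (a t) = 0) :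
    ∀ (N : ℕ) (d : Fin k → ℕ), (∑ t, d t) = N → ∀ m : Fin n →₀ ℕ,
      (m.sum fun _ e => e) < N → MvPowerSeries.coeff m (∏ t, a t ^ d t) = 0 := by
  intro N
  induction N with
  | zero => exact fun d hd m hm => absurd hm (Nat.not_lt_zero _)
  | succ N ih =>
    intro d hd m hm
    have hex : ∃ t0, d t0 ≠ 0 := by
      by_contra hc
      push_neg at hc
      simp [hc] at hd
    obtain ⟨t0, ht0⟩ := hex
    classical
    set d' : Fin k → ℕ := fun t => d t - (if t = t0 then 1 else 0) with hd'def
    have hsplit : ∀ t, d t = d' t + (if t = t0 then 1 else 0) := by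
      intro t
      by_cases h : t = t0 <;> simp [d', h] <;> omega
    have hsum' : (∑ t, d' t) = N := by
      have h1 : (∑ t, d t) = (∑ t, d' t) + ∑ t, (if t = t0 then 1 else 0) := by
        rw [← Finset.sum_add_distrib]
        exact Finset.sum_congr rfl fun t _ => hsplit t
      have h2 : (∑ t : Fin k, (if t = t0 then 1 else 0)) = 1 := by simp
      omega
    have hprod : (∏ t, a t ^ d t) = (∏ t, a t ^ d' t) * a t0 := by
      calc (∏ t, a t ^ d t)
          = ∏ t, (a t ^ d' t * a t ^ (if t = t0 then 1 else 0)) :=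
            Finset.prod_congr rfl fun t _ => by rw [← pow_add, ← hsplit]
        _ = (∏ t, a t ^ d' t) * ∏ t, a t ^ (if t = t0 then 1 else 0) :=
            Finset.prod_mul_distrib
        _ = (∏ t, a t ^ d' t) * a t0 := by
            congr 1
            rw [Finset.prod_eq_single t0]
            · simp
            · intro b _ hb; simp [hb]
            · simp
    rw [hprod, MvPowerSeries.coeff_mul]
    apply Finset.sum_eq_zero
    intro p hp
    simp only [Finset.HasAntidiagonal.mem_antidiagonal] at hp
    by_cases h2 : p.2 = 0
    · have : MvPowerSeries.coeff p.2 (a t0) = 0 := by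
        rw [h2, MvPowerSeries.coeff_zero_eq_constantCoeff, ha t0]
      rw [this, mul_zero]
    · have hdeg2 : 1 ≤ p.2.sum fun _ e => e := by
        rcases Nat.eq_zero_or_pos (p.2.sum fun _ e => e) with h | h
        · exact absurd ((aux_degm_zero_iff p.2).mp h) h2
        · exact h
      have hdeg : (p.1.sum fun _ e => e) < N := by
        have := aux_degm_add p.1 p.2
        rw [hp] at this
        omega
      rw [ih d' hsum' p.1 hdeg, zero_mul]

/-- Renaming commutes with substitution of series with zero constant coefficient. -/
theorem rrename_msubst {k k' n : ℕ} {r : Fin k → Fin n} (hr : Function.Injective r)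
    (a : Fin k' → MvPowerSeries (Fin k) S)
    (ha : ∀ t, MvPowerSeries.constantCoeff (σ := Fin k) (R := S) (a t) = 0)
    (h : MvPowerSeries (Fin k') S) :
    rrename r (msubst a h) = msubst (fun t => rrename r (a t)) h := by
  ext m
  rw [coeff_rrename]
  show _ = (∑ d ∈ Finset.Iic (equivFunOnFinite.symm fun _ : Fin k' => m.sum fun _ e => e),
      MvPowerSeries.coeff d h * MvPowerSeries.coeff m (∏ t, (rrename r (a t)) ^ d t))
  have key : ∀ d : Fin k' →₀ ℕ,
      (∏ t, (rrename r (a t)) ^ d t) = rrename r (∏ t, a t ^ d t) := by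
    intro d
    calc (∏ t, (rrename r (a t)) ^ d t)
        = ∏ t, rrenameHom r hr ((a t) ^ d t) :=
          Finset.prod_congr rfl fun t _ => (map_pow (rrenameHom r hr) (a t) (d t)).symm
      _ = rrenameHom r hr (∏ t, a t ^ d t) := (map_prod (rrenameHom r hr) _ _).symm
  by_cases hs : RSupp r m
  · rw [if_pos hs]
    show (∑ d ∈ Finset.Iic (equivFunOnFinite.symm fun _ : Fin k' =>
        (rmap r m).sum fun _ e => e), MvPowerSeries.coeff d h *
        MvPowerSeries.coeff (rmap r m) (∏ t, a t ^ d t)) = _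
    have hres : (∑ d ∈ Finset.Iic (equivFunOnFinite.symm fun _ : Fin k' =>
          m.sum fun _ e => e), MvPowerSeries.coeff d h *
          MvPowerSeries.coeff m (∏ t, (rrename r (a t)) ^ d t))
        = ∑ d ∈ Finset.Iic (equivFunOnFinite.symm fun _ : Fin k' =>
          m.sum fun _ e => e), MvPowerSeries.coeff d h *
          MvPowerSeries.coeff (rmap r m) (∏ t, a t ^ d t) :=
      Finset.sum_congr rfl fun d _ => by rw [key d, coeff_rrename, if_pos hs]
    rw [hres]
    apply Finset.sum_subset
    · apply Finset.Iic_subset_Iic.mpr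
      intro t
      exact degm_rmap_le hr m
    · intro d hd hd'
      rw [Finset.mem_Iic] at hd hd'
      have : ∃ t0, ¬ d t0 ≤ (rmap r m).sum fun _ e => e := by
        by_contra hc2
        push_neg at hc2
        exact hd' fun t => hc2 t
      obtain ⟨t0, ht0⟩ := this
      have hlt : ((rmap r m).sum fun _ e => e) < ∑ t, (d t : ℕ) := by
        have h1 : d t0 ≤ ∑ t, (d t : ℕ) :=
          Finset.single_le_sum (fun _ _ => Nat.zero_le _) (Finset.mem_univ t0)
        omega
      rw [coeff_prod_pow_eq_zero a ha (∑ t, (d t : ℕ)) (fun t => d t) rfl _ hlt, mul_zero]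
  · rw [if_neg hs]
    symm
    apply Finset.sum_eq_zero
    intro d _
    rw [key d, coeff_rrename, if_neg hs, mul_zero]

end AuxNabla3
section AuxNabla4

variable {S : Type*} [CommRing S]

theorem coeff_X_mul' {n : ℕ} (s : Fin n) (f : MvPowerSeries (Fin n) S) (m : Fin n →₀ ℕ) :
    MvPowerSeries.coeff m ((MvPowerSeries.X s) * f)
      = if Finsupp.single s 1 ≤ m
          then MvPowerSeries.coeff (m - Finsupp.single s 1) f else 0 := by
  rw [MvPowerSeries.X, MvPowerSeries.coeff_monomial_mul]
  split <;> simp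

theorem X_sub_X_regular {n : ℕ} {i j : Fin n} (hij : i ≠ j) (f : MvPowerSeries (Fin n) S)
    (hf : ((MvPowerSeries.X j : MvPowerSeries (Fin n) S) - MvPowerSeries.X i) * f = 0) :
    f = 0 := by
  have hXf : ∀ m : Fin n →₀ ℕ,
      MvPowerSeries.coeff m ((MvPowerSeries.X j) * f)
        = MvPowerSeries.coeff m ((MvPowerSeries.X i) * f) := by
    intro m
    have h0 : (MvPowerSeries.X j : MvPowerSeries (Fin n) S) * f
        - (MvPowerSeries.X i) * f = 0 := by
      rw [← sub_mul, hf]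
    have := congrArg (MvPowerSeries.coeff m) h0
    rw [map_sub, map_zero] at this
    exact sub_eq_zero.mp this
  have key : ∀ (N : ℕ) (m : Fin n →₀ ℕ), m i = N → MvPowerSeries.coeff m f = 0 := by
    intro N
    induction N with
    | zero =>
      intro m hm
      have h1 := hXf (m + Finsupp.single j 1)
      rw [coeff_X_mul', coeff_X_mul', if_pos (by exact le_add_self),
        add_tsub_cancel_right, if_neg] at h1
      · exact h1
      · rw [Finsupp.single_le_iff, Finsupp.add_apply, Finsupp.single_apply,
          if_neg hij.symm, hm]
        omega
    | succ N ih =>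
      intro m hm
      have h1 := hXf (m + Finsupp.single j 1)
      rw [coeff_X_mul', coeff_X_mul', if_pos (by exact le_add_self),
        add_tsub_cancel_right, if_pos] at h1
      · rw [h1]
        apply ih
        rw [Finsupp.tsub_apply, Finsupp.add_apply, Finsupp.single_apply,
          Finsupp.single_apply, if_neg hij.symm, if_pos rfl, hm]
        omega
      · rw [Finsupp.single_le_iff, Finsupp.add_apply, Finsupp.single_apply,
          if_neg hij.symm, hm]
        omega
  ext m
  rw [map_zero]
  exact key (m i) m rfl

theorem swapVars_X_left {n : ℕ} (i j : Fin n) :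
    swapVars i j (MvPowerSeries.X i : MvPowerSeries (Fin n) S) = MvPowerSeries.X j := by
  ext m
  rw [swapVars_coeff, MvPowerSeries.coeff_X, MvPowerSeries.coeff_X]
  have : equivMapDomain (Equiv.swap i j) m = Finsupp.single i 1
      ↔ m = Finsupp.single j 1 := by
    constructor
    · intro h
      have := congrArg (equivMapDomain (Equiv.swap i j)) h
      rwa [equivMapDomain_swap_invol, equivMapDomain_single, Equiv.swap_apply_left] at this
    · intro h
      subst h
      rw [equivMapDomain_single, Equiv.swap_apply_right]
  simp only [this]

end AuxNabla4

set_option maxHeartbeats 1000000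
set_option synthInstance.maxHeartbeats 100000

/-- there is a left-`R`-linear map `∇ : A → R` with
`∇(r1 ⊗ r2) = r1·∂'_i(r2)`, and `∇((r ⊗ 1)·ξ') = r`, so `r ↦ (r ⊗ 1)·ξ'` is a section
of `∇`. -/
theorem exists_nabla_retraction
    (F : MvPowerSeries (Fin 2) S) (hF : IsFormalGroupLaw F)
    (ι : MvPowerSeries (Fin 1) S) (hι : IsFormalInverse F ι)
    (g : MvPowerSeries (Fin 2) S)
    (hg : (X 0 : MvPowerSeries (Fin 2) S) - X 1 = fsub F ι (X 0) (X 1) * g)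
    (hgu : IsUnit g)
    {n : ℕ} (i j : Fin n) (hij : (i : ℕ) + 1 = (j : ℕ))
    (Dem' : MvPowerSeries (Fin n) S → MvPowerSeries (Fin n) S)
    (hDem' : ∀ f, fsub F ι (X j : MvPowerSeries (Fin n) S) (X i) * Dem' f
                    = swapVars i j f - f) :
    ∃ Nabla : BSB S i j →ₗ[MvPowerSeries (Fin n) S] MvPowerSeries (Fin n) S,
      (∀ r1 r2 : MvPowerSeries (Fin n) S,
          Nabla (r1 ⊗ₜ[fixedSubalgebra S i j] r2) = r1 * Dem' r2) ∧
      (∀ r : MvPowerSeries (Fin n) S,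
          Nabla ((r ⊗ₜ[fixedSubalgebra S i j] (1 : MvPowerSeries (Fin n) S))
            * xiElt' g i j) = r) := by
  classical
  have hne : i ≠ j := by
    intro h
    rw [h] at hij
    omega
  -- the variable renaming x_0 ↦ x_j, x_1 ↦ x_i
  set r2 : Fin 2 → Fin n := ![j, i] with hr2def
  have hr20 : r2 0 = j := rfl
  have hr21 : r2 1 = i := rfl
  have hr2 : Function.Injective r2 := by
    intro a b hab
    fin_cases a <;> fin_cases b <;> simp_all [r2] <;> exact absurd hab hne.symm
  have hXr2 : (fun t => (X (r2 t) : MvPowerSeries (Fin n) S)) = ![X j, X i] := by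
    funext t
    fin_cases t <;> rfl
  have hrg : rrename r2 g = gsub g (X j) (X i) := by
    rw [gsub, ← hXr2, msubst_X_eq_rrename hr2]
  have hccX0 : MvPowerSeries.constantCoeff (σ := Fin 2) (R := S) (X 0) = 0 := MvPowerSeries.constantCoeff_X _
  have hccι : MvPowerSeries.constantCoeff (σ := Fin 2) (R := S)
      (fneg ι (X 1 : MvPowerSeries (Fin 2) S)) = 0 := by
    rw [fneg, constantCoeff_msubst]
    exact hι.1
  have hrfneg : rrename r2 (fneg ι (X 1 : MvPowerSeries (Fin 2) S)) = fneg ι (X i) := by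
    rw [fneg, fneg, rrename_msubst hr2 _ (fun t => by
      fin_cases t
      exact MvPowerSeries.constantCoeff_X _)]
    have ha : (fun t => rrename r2 ((![X 1] : Fin 1 → MvPowerSeries (Fin 2) S) t))
        = ![(X i : MvPowerSeries (Fin n) S)] := by
      funext t
      fin_cases t
      exact rrename_X hr2 1
    rw [ha]
  have hrfsub : rrename r2 (fsub F ι (X 0) (X 1)) = fsub F ι (X j) (X i) := by
    rw [fsub, fsub, rrename_msubst hr2 _ (fun t => by
      fin_cases t
      · exact hccX0
      · exact hccι)]
    have ha : (fun t => rrename r2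
          ((![X 0, fneg ι (X 1)] : Fin 2 → MvPowerSeries (Fin 2) S) t))
        = ![(X j : MvPowerSeries (Fin n) S), fneg ι (X i)] := by
      funext t
      fin_cases t
      · exact rrename_X hr2 0
      · exact hrfneg
    rw [ha]
  have h3 : (X j : MvPowerSeries (Fin n) S) - X i
      = fsub F ι (X j) (X i) * gsub g (X j) (X i) := by
    have h := congrArg (rrenameHom (S := S) r2 hr2) hg
    rw [map_sub, map_mul] at h
    rw [rrenameHom_apply, rrenameHom_apply, rrenameHom_apply, rrenameHom_apply] at h
    rw [hrfsub, hrg, rrename_X hr2 0, rrename_X hr2 1] at h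
    exact h
  have hu : IsUnit (gsub g (X j) (X i)) := by
    rw [MvPowerSeries.isUnit_iff_constantCoeff, gsub, constantCoeff_msubst]
    exact MvPowerSeries.isUnit_iff_constantCoeff.mp hgu
  have hvu : Ring.inverse (gsub g (X j) (X i)) * gsub g (X j) (X i) = 1 :=
    Ring.inverse_mul_cancel _ hu
  set φ : MvPowerSeries (Fin n) S := fsub F ι (X j) (X i) with hφdef
  have hcancel : ∀ c c' : MvPowerSeries (Fin n) S, φ * c = φ * c' → c = c' := by
    intro c c' hcc'
    have h0 : ((X j : MvPowerSeries (Fin n) S) - X i) * (c - c') = 0 := by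
      rw [h3]
      calc fsub F ι (X j) (X i) * gsub g (X j) (X i) * (c - c')
          = (φ * c - φ * c') * gsub g (X j) (X i) := by rw [hφdef]; ring
        _ = 0 := by rw [hcc', sub_self, zero_mul]
    exact sub_eq_zero.mp (X_sub_X_regular hne _ h0)
  have hsX : swapVars i j (X i : MvPowerSeries (Fin n) S) = X j := swapVars_X_left i j
  have hμt : ∀ r1 r2 : MvPowerSeries (Fin n) S,
      mulHom S i j (r1 ⊗ₜ[fixedSubalgebra S i j] r2) = r1 * r2 := fun r1 r2 => by
    erw [mulHom, Algebra.TensorProduct.productMap_apply_tmul]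
    rfl
  have hμst : ∀ r1 r2 : MvPowerSeries (Fin n) S,
      mulsHom S i j (r1 ⊗ₜ[fixedSubalgebra S i j] r2) = r1 * swapVars i j r2 := fun r1 r2 => by
    erw [mulsHom, Algebra.TensorProduct.productMap_apply_tmul]
    rfl
  have hμ0 : mulHom S i j 0 = 0 := map_zero _
  have hμs0 : mulsHom S i j 0 = 0 := map_zero _
  have hμadd : ∀ a b : BSB S i j, mulHom S i j (a + b) = mulHom S i j a + mulHom S i j b :=
    fun a b => map_add _ a b
  have hμsadd : ∀ a b : BSB S i j, mulsHom S i j (a + b) = mulsHom S i j a + mulsHom S i j b :=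
    fun a b => map_add _ a b
  have hμmul : ∀ a b : BSB S i j, mulHom S i j (a * b) = mulHom S i j a * mulHom S i j b :=
    fun a b => map_mul _ a b
  have hμsmul : ∀ a b : BSB S i j, mulsHom S i j (a * b) = mulsHom S i j a * mulsHom S i j b :=
    fun a b => map_mul _ a b
  have hμsub : ∀ a b : BSB S i j, mulHom S i j (a - b) = mulHom S i j a - mulHom S i j b :=
    fun a b => map_sub _ a b
  have hμssub : ∀ a b : BSB S i j, mulsHom S i j (a - b) = mulsHom S i j a - mulsHom S i j b :=
    fun a b => map_sub _ a b
  have hδ : ∀ a : BSB S i j, ∃ c : MvPowerSeries (Fin n) S,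
      φ * c = mulsHom S i j a - mulHom S i j a := by
    intro a
    induction a using TensorProduct.induction_on with
    | zero => exact ⟨0, by rw [hμ0, hμs0, mul_zero, sub_zero]⟩
    | tmul x y =>
      refine ⟨x * Dem' y, ?_⟩
      rw [hμt, hμst]
      linear_combination x * hDem' y
    | add x y hx hy =>
      obtain ⟨c, hc⟩ := hx
      obtain ⟨c', hc'⟩ := hy
      refine ⟨c + c', ?_⟩
      rw [hμadd, hμsadd]
      linear_combination hc + hc'
  choose Nf hNf using hδ
  have hsmultmul : ∀ (r x y : MvPowerSeries (Fin n) S),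
      r • (x ⊗ₜ[fixedSubalgebra S i j] y) = (r * x) ⊗ₜ[fixedSubalgebra S i j] y :=
    fun r x y => by rw [TensorProduct.smul_tmul']; rfl
  have hδs : ∀ (r : MvPowerSeries (Fin n) S) (a : BSB S i j),
      mulsHom S i j (r • a) - mulHom S i j (r • a)
        = r * (mulsHom S i j a - mulHom S i j a) := by
    intro r a
    induction a using TensorProduct.induction_on with
    | zero =>
      rw [smul_zero, hμ0, hμs0]
      ring
    | tmul x y =>
      rw [hsmultmul, hμt, hμt, hμst, hμst]
      ring
    | add x y hx hy =>
      rw [smul_add, hμadd, hμsadd, hμadd, hμsadd]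
      linear_combination hx + hy
  have hNadd : ∀ a b : BSB S i j, Nf (a + b) = Nf a + Nf b := by
    intro a b
    apply hcancel
    rw [hNf, mul_add, hNf, hNf, hμadd, hμsadd]
    ring
  have hNsmul : ∀ (r : MvPowerSeries (Fin n) S) (a : BSB S i j), Nf (r • a) = r • Nf a := by
    intro r a
    apply hcancel
    rw [hNf, hδs, smul_eq_mul, ← hNf]
    ring
  refine ⟨{ toFun := Nf, map_add' := hNadd, map_smul' := hNsmul }, ?_, ?_⟩
  · intro r1 r2
    show Nf (r1 ⊗ₜ[fixedSubalgebra S i j] r2) = r1 * Dem' r2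
    apply hcancel
    rw [hNf, hμt, hμst]
    linear_combination (-r1) * hDem' r2
  · intro r
    show Nf ((r ⊗ₜ[fixedSubalgebra S i j] 1) * xiElt' g i j) = r
    apply hcancel
    rw [hNf, xiElt']
    rw [hμmul, hμmul, hμsmul, hμsmul, hμsub, hμssub]
    rw [hμt, hμt, hμt, hμt, hμst, hμst, hμst, hμst, swapVars_one, hsX]
    linear_combination (r * Ring.inverse (gsub g (X j) (X i))) * h3
      + (φ * r) * hvu

end
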